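/- Let Γ' be a normal subgroup of Γ of finite index, Z' = Z ∩ Γ', and χ' the restriction of χ to Z'. Let N be the two-sided ideal of ℂ[Γ] generated by { z − χ(z)·1 : z ∈ Z } and N' the two-sided ideal of ℂ[Γ'] generated by { z − χ'(z)·1 : z ∈ Z' }. Then the ℂ-algebra homomorphism ℂ[Γ'] → ℂ[Γ]/N induced by the inclusion Γ' ⊆ Γ vanishes on N', hence induces a ℂ-algebra homomorphism φ : ℂ[Γ']/N' → ℂ[Γ]/N; moreover φ is injective, and for any set X ⊆ Γ of representatives of the cosets of the subgroup Γ'Z in Γ, the images of the elements of X in ℂ[Γ]/N form a basis of ℂ[Γ]/N as a left module over ℂ[Γ']/N' (with module structure given by φ). In particular ℂ[Γ]/N is a free left ℂ[Γ']/N'-module of rank [Γ : Γ'Z]. -/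

import Mathlib

open Finsupp

namespace CPD

noncomputable section

variable {Γ : Type*} [Group Γ] (Z : Subgroup Γ) (χ : Z →* ℂˣ)

/-- ring-theoretic generators -/
def sgen : Set (MonoidAlgebra ℂ Γ) :=
  {y | ∃ z : Z, y = MonoidAlgebra.of ℂ Γ (z : Γ) - (χ z : ℂ) • 1}

/-- linear-space generators of the ideal -/
def vgen : Set (MonoidAlgebra ℂ Γ) :=
  {y | ∃ (g : Γ) (z : Z), y = MonoidAlgebra.single (g * z) 1
    - (χ z : ℂ) • MonoidAlgebra.single g 1}

def V : Submodule ℂ (MonoidAlgebra ℂ Γ) := Submodule.span ℂ (vgen Z χ)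

lemma gen_mem_V (g : Γ) (z : Z) (a : ℂ) :
    MonoidAlgebra.single (g * z) a - (χ z : ℂ) • MonoidAlgebra.single g a ∈ V Z χ := by
  have : MonoidAlgebra.single (g * z) a - (χ z : ℂ) • MonoidAlgebra.single g a
      = a • (MonoidAlgebra.single (g * (z:Γ)) 1 - (χ z : ℂ) • MonoidAlgebra.single g 1) := by
    rw [smul_sub, smul_comm a]
    simp [MonoidAlgebra.smul_single, smul_eq_mul]
  rw [this]
  exact Submodule.smul_mem _ _ (Submodule.subset_span ⟨g, z, rfl⟩)

lemma mul_left_mem_V (p x : MonoidAlgebra ℂ Γ) (hx : x ∈ V Z χ) : p * x ∈ V Z χ := by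
  induction hx using Submodule.span_induction with
  | mem y hy =>
    obtain ⟨g, z, rfl⟩ := hy
    rw [mul_sub, mul_smul_comm]
    induction p using MonoidAlgebra.induction with
    | zero => simp
    | single_add h b f _ _ ih =>
      rw [add_mul, add_mul, smul_add, add_sub_add_comm]
      refine Submodule.add_mem _ ?_ ih
      have h1 : (MonoidAlgebra.single h b : MonoidAlgebra ℂ Γ) * MonoidAlgebra.single (g*z) 1
          = MonoidAlgebra.single ((h*g) * z) b := by
        rw [MonoidAlgebra.single_mul_single, mul_one, mul_assoc]
      have h2 : (MonoidAlgebra.single h b : MonoidAlgebra ℂ Γ) * MonoidAlgebra.single g 1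
          = MonoidAlgebra.single (h*g) b := by
        rw [MonoidAlgebra.single_mul_single, mul_one]
      rw [h1, h2]
      exact gen_mem_V Z χ _ _ _
  | zero => simp
  | add y z _ _ hy hz => rw [mul_add]; exact Submodule.add_mem _ hy hz
  | smul c y _ hy => rw [mul_smul_comm]; exact Submodule.smul_mem _ _ hy

lemma mul_right_mem_V (hZ : Z ≤ Subgroup.center Γ) (x p : MonoidAlgebra ℂ Γ)
    (hx : x ∈ V Z χ) : x * p ∈ V Z χ := by
  induction hx using Submodule.span_induction with
  | mem y hy =>
    obtain ⟨g, z, rfl⟩ := hy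
    rw [sub_mul, smul_mul_assoc]
    induction p using MonoidAlgebra.induction with
    | zero => simp
    | single_add h b f _ _ ih =>
      rw [mul_add, mul_add, smul_add, add_sub_add_comm]
      refine Submodule.add_mem _ ?_ ih
      have hc : (z : Γ) * h = h * z := ((Subgroup.mem_center_iff.mp (hZ z.2)) h).symm
      have h1 : (MonoidAlgebra.single (g*z) 1 : MonoidAlgebra ℂ Γ) * MonoidAlgebra.single h b
          = MonoidAlgebra.single ((g*h) * z) b := by
        rw [MonoidAlgebra.single_mul_single, one_mul, mul_assoc, hc, ← mul_assoc]
      have h2 : (MonoidAlgebra.single g 1 : MonoidAlgebra ℂ Γ) * MonoidAlgebra.single h b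
          = MonoidAlgebra.single (g*h) b := by
        rw [MonoidAlgebra.single_mul_single, one_mul]
      rw [h1, h2]
      exact gen_mem_V Z χ _ _ _
  | zero => simp
  | add y z _ _ hy hz => rw [add_mul]; exact Submodule.add_mem _ hy hz
  | smul c y _ hy => rw [smul_mul_assoc]; exact Submodule.smul_mem _ _ hy

/-- the two-sided ideal structure on `V` -/
def VI (hZ : Z ≤ Subgroup.center Γ) : TwoSidedIdeal (MonoidAlgebra ℂ Γ) :=
  TwoSidedIdeal.mk' (V Z χ) (Submodule.zero_mem _)
    (fun ha hb => Submodule.add_mem _ ha hb)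
    (fun ha => Submodule.neg_mem _ ha)
    (fun {x y} hy => mul_left_mem_V Z χ x y hy)
    (fun {x y} hx => mul_right_mem_V Z χ hZ x y hx)

lemma span_sgen_eq_VI (hZ : Z ≤ Subgroup.center Γ) :
    TwoSidedIdeal.span (sgen Z χ) = VI Z χ hZ := by
  apply le_antisymm
  · intro x hx
    refine TwoSidedIdeal.mem_span_iff.mp hx (VI Z χ hZ) ?_
    rintro y ⟨z, rfl⟩
    simp only [VI, SetLike.mem_coe, TwoSidedIdeal.mem_mk']
    have : MonoidAlgebra.of ℂ Γ (z : Γ) - (χ z : ℂ) • 1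
        = MonoidAlgebra.single ((1:Γ) * z) 1 - (χ z : ℂ) • MonoidAlgebra.single (1:Γ) 1 := by
      rw [MonoidAlgebra.of_apply, one_mul, MonoidAlgebra.one_def]
    rw [this]
    exact gen_mem_V Z χ _ _ _
  · intro x hx
    simp only [VI, SetLike.mem_coe, TwoSidedIdeal.mem_mk'] at hx
    induction hx using Submodule.span_induction with
    | mem y hy =>
      obtain ⟨g, z, rfl⟩ := hy
      have : MonoidAlgebra.single (g * z) 1 - (χ z : ℂ) • MonoidAlgebra.single g 1
          = MonoidAlgebra.single g 1 * (MonoidAlgebra.of ℂ Γ (z : Γ) - (χ z : ℂ) • 1) := by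
        rw [mul_sub, mul_smul_comm, mul_one, MonoidAlgebra.of_apply,
          MonoidAlgebra.single_mul_single, mul_one]
      rw [this]
      exact TwoSidedIdeal.mul_mem_left _ _ _ (TwoSidedIdeal.subset_span ⟨z, rfl⟩)
    | zero => exact TwoSidedIdeal.zero_mem _
    | add y z _ _ hy hz => exact TwoSidedIdeal.add_mem _ hy hz
    | smul c y _ hy =>
      rw [Algebra.smul_def]
      exact TwoSidedIdeal.mul_mem_left _ _ _ hy


section Sect

variable (σ : Γ ⧸ Z → Γ) (hσ : ∀ q, QuotientGroup.mk (σ q) = q)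

/-- the `Z`-part of `g` relative to the section `σ` -/
def w (g : Γ) : Z :=
  ⟨(σ (QuotientGroup.mk g))⁻¹ * g, QuotientGroup.eq.mp (hσ (QuotientGroup.mk g))⟩

lemma σ_spec (g : Γ) : σ (QuotientGroup.mk g) * (w Z σ hσ g : Γ) = g := by
  simp [w]

lemma w_mul (g : Γ) (z : Z) : w Z σ hσ (g * z) = w Z σ hσ g * z := by
  have hq : (QuotientGroup.mk (g * z) : Γ ⧸ Z) = QuotientGroup.mk g :=
    QuotientGroup.mk_mul_of_mem g z.2
  apply Subtype.ext
  simp only [w, Subgroup.coe_mul, hq, mul_assoc]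

/-- the `χ`-twisted symbol map -/
def T (x : MonoidAlgebra ℂ Γ) : (Γ ⧸ Z) →₀ ℂ :=
  x.coeff.sum fun g a => Finsupp.single (QuotientGroup.mk g) ((χ (w Z σ hσ g) : ℂ) * a)

lemma T_zero : T Z χ σ hσ 0 = 0 := Finsupp.sum_zero_index

lemma T_single (g : Γ) (a : ℂ) :
    T Z χ σ hσ (MonoidAlgebra.single g a)
      = Finsupp.single (QuotientGroup.mk g) ((χ (w Z σ hσ g) : ℂ) * a) :=
  Finsupp.sum_single_index (by simp)

lemma T_add (x y : MonoidAlgebra ℂ Γ) :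
    T Z χ σ hσ (x + y) = T Z χ σ hσ x + T Z χ σ hσ y :=
  Finsupp.sum_add_index' (by simp) (by intros; rw [mul_add, Finsupp.single_add])

lemma T_sub (x y : MonoidAlgebra ℂ Γ) :
    T Z χ σ hσ (x - y) = T Z χ σ hσ x - T Z χ σ hσ y :=
  Finsupp.sum_sub_index (by intros; rw [mul_sub, Finsupp.single_sub])

lemma T_smul (c : ℂ) (x : MonoidAlgebra ℂ Γ) :
    T Z χ σ hσ (c • x) = c • T Z χ σ hσ x := by
  rw [T, T, MonoidAlgebra.coeff_smul, Finsupp.smul_sum, Finsupp.sum_smul_index (by simp)]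
  exact Finsupp.sum_congr fun g _ => by rw [Finsupp.smul_single, smul_eq_mul, mul_left_comm]

lemma T_eq_zero_of_mem_V (x : MonoidAlgebra ℂ Γ) (hx : x ∈ V Z χ) :
    T Z χ σ hσ x = 0 := by
  induction hx using Submodule.span_induction with
  | mem y hy =>
    obtain ⟨g, z, rfl⟩ := hy
    rw [T_sub, T_smul, T_single, T_single, w_mul]
    rw [QuotientGroup.mk_mul_of_mem g z.2]
    rw [map_mul, Finsupp.smul_single, smul_eq_mul]
    push_cast
    ring_nf
    exact sub_self _
  | zero => exact T_zero Z χ σ hσ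
  | add y z _ _ hy hz => rw [T_add, hy, hz, add_zero]
  | smul c y _ hy => rw [T_smul, hy, smul_zero]

/-- section of `T` -/
def Rf (f : (Γ ⧸ Z) →₀ ℂ) : MonoidAlgebra ℂ Γ :=
  f.sum fun q a => MonoidAlgebra.single (σ q) a

lemma Rf_zero : Rf (Z := Z) σ 0 = 0 := Finsupp.sum_zero_index

lemma Rf_single (q : Γ ⧸ Z) (a : ℂ) :
    Rf (Z := Z) σ (Finsupp.single q a) = MonoidAlgebra.single (σ q) a :=
  Finsupp.sum_single_index (by simp)

lemma Rf_add (f g : (Γ ⧸ Z) →₀ ℂ) :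
    Rf (Z := Z) σ (f + g) = Rf (Z := Z) σ f + Rf (Z := Z) σ g :=
  Finsupp.sum_add_index' (by simp) (by intros; rw [MonoidAlgebra.single_add])

lemma Rf_smul (c : ℂ) (f : (Γ ⧸ Z) →₀ ℂ) :
    Rf (Z := Z) σ (c • f) = c • Rf (Z := Z) σ f := by
  rw [Rf, Rf, Finsupp.smul_sum, Finsupp.sum_smul_index (by simp)]
  exact Finsupp.sum_congr fun q _ => by
    rw [MonoidAlgebra.smul_single, smul_eq_mul]

lemma sub_Rf_mem (x : MonoidAlgebra ℂ Γ) :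
    x - Rf (Z := Z) σ (T Z χ σ hσ x) ∈ V Z χ := by
  induction x using MonoidAlgebra.induction_on with
  | of g =>
    rw [MonoidAlgebra.of_apply, T_single, Rf_single]
    have : MonoidAlgebra.single g 1
          - MonoidAlgebra.single (σ (QuotientGroup.mk g)) ((χ (w Z σ hσ g) : ℂ) * 1)
        = MonoidAlgebra.single (σ (QuotientGroup.mk g) * (w Z σ hσ g : Γ)) 1
          - (χ (w Z σ hσ g) : ℂ) • MonoidAlgebra.single (σ (QuotientGroup.mk g)) 1 := by
      rw [σ_spec, MonoidAlgebra.smul_single, smul_eq_mul]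
    rw [this]
    exact gen_mem_V Z χ _ _ _
  | add f g hf hg =>
    rw [T_add, Rf_add]
    have : f + g - (Rf (Z := Z) σ (T Z χ σ hσ f) + Rf (Z := Z) σ (T Z χ σ hσ g))
        = (f - Rf (Z := Z) σ (T Z χ σ hσ f)) + (g - Rf (Z := Z) σ (T Z χ σ hσ g)) := by abel
    rw [this]
    exact Submodule.add_mem _ hf hg
  | smul c f hf =>
    rw [T_smul, Rf_smul, ← smul_sub]
    exact Submodule.smul_mem _ _ hf

lemma mem_V_iff (x : MonoidAlgebra ℂ Γ) : x ∈ V Z χ ↔ T Z χ σ hσ x = 0 := by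
  constructor
  · exact T_eq_zero_of_mem_V Z χ σ hσ x
  · intro h
    have := sub_Rf_mem Z χ σ hσ x
    rwa [h, Rf_zero, sub_zero] at this

lemma T_finsetSum {ι : Type*} (S : Finset ι) (f : ι → MonoidAlgebra ℂ Γ) :
    T Z χ σ hσ (∑ i ∈ S, f i) = ∑ i ∈ S, T Z χ σ hσ (f i) := by
  classical
  induction S using Finset.cons_induction with
  | empty => simpa using T_zero Z χ σ hσ
  | cons i S hi ih => rw [Finset.sum_cons, Finset.sum_cons, T_add, ih]

lemma mk'_span_eq_zero_iff (hZ : Z ≤ Subgroup.center Γ) (x : MonoidAlgebra ℂ Γ) :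
    (TwoSidedIdeal.span (sgen Z χ)).ringCon.mk' x = 0 ↔ T Z χ σ hσ x = 0 := by
  rw [← TwoSidedIdeal.mem_ker, TwoSidedIdeal.ker_ringCon_mk', span_sgen_eq_VI Z χ hZ, VI,
    TwoSidedIdeal.mem_mk', SetLike.mem_coe]
  exact mem_V_iff Z χ σ hσ x

end Sect

section Compat

variable (Γ' : Subgroup Γ)

/-- the subgroup `Z ∩ Γ'` of `Γ'` -/
abbrev Zc : Subgroup Γ' := Z.comap Γ'.subtype

/-- inclusion `Z ∩ Γ' → Z` -/
def incl : Zc Z Γ' →* Z where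
  toFun z := ⟨((z : Γ') : Γ), z.2⟩
  map_one' := rfl
  map_mul' _ _ := rfl

/-- restriction of the character -/
def χres : Zc Z Γ' →* ℂˣ := χ.comp (incl Z Γ')

/-- section for `Γ' ⧸ (Z ∩ Γ')` -/
def σs : Γ' ⧸ Zc Z Γ' → Γ' := Quotient.out

lemma hσs : ∀ q : Γ' ⧸ Zc Z Γ', QuotientGroup.mk (σs Z Γ' q) = q := fun q =>
  QuotientGroup.out_eq' q

open Classical in
/-- section for `Γ ⧸ Z` compatible with `σs` -/
def σb : Γ ⧸ Z → Γ := fun q =>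
  if h : ∃ g' : Γ', QuotientGroup.mk ((g' : Γ')  : Γ) = q
  then ((σs Z Γ' (QuotientGroup.mk h.choose) : Γ') : Γ)
  else q.out

lemma mk_coe_σs (g' : Γ') :
    (QuotientGroup.mk ((σs Z Γ' (QuotientGroup.mk g') : Γ') : Γ) : Γ ⧸ Z)
      = QuotientGroup.mk (g' : Γ) := by
  have h1 : (σs Z Γ' (QuotientGroup.mk g'))⁻¹ * g' ∈ Zc Z Γ' :=
    QuotientGroup.eq.mp (hσs Z Γ' (QuotientGroup.mk g'))
  refine QuotientGroup.eq.mpr ?_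
  have : ((σs Z Γ' (QuotientGroup.mk g') : Γ') : Γ)⁻¹ * (g' : Γ)
      = (((σs Z Γ' (QuotientGroup.mk g'))⁻¹ * g' : Γ') : Γ) := by push_cast; ring_nf
  rw [this]
  exact h1

lemma hσb : ∀ q : Γ ⧸ Z, QuotientGroup.mk (σb Z Γ' q) = q := by
  intro q
  rw [σb]
  split_ifs with h
  · rw [mk_coe_σs, h.choose_spec]
  · exact QuotientGroup.out_eq' q

lemma σb_coe (g' : Γ') : σb Z Γ' (QuotientGroup.mk (g' : Γ)) = ((σs Z Γ' (QuotientGroup.mk g') : Γ') : Γ) := by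
  have h : ∃ h' : Γ', QuotientGroup.mk ((h' : Γ') : Γ) = (QuotientGroup.mk (g' : Γ) : Γ ⧸ Z) :=
    ⟨g', rfl⟩
  rw [σb, dif_pos h]
  congr 1
  have hcs := h.choose_spec
  have h2 : (h.choose)⁻¹ * g' ∈ Zc Z Γ' := by
    have : ((h.choose : Γ') : Γ)⁻¹ * (g' : Γ) ∈ Z := QuotientGroup.eq.mp hcs
    exact this
  congr 1
  exact QuotientGroup.eq.mpr h2

lemma w_key (hZ : Z ≤ Subgroup.center Γ) (g' : Γ') (x : Γ) :
    (g' : Γ) * x = ((σs Z Γ' (QuotientGroup.mk g') : Γ') : Γ) * x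
      * ((incl Z Γ' (w (Zc Z Γ') (σs Z Γ') (hσs Z Γ') g') : Z) : Γ) := by
  have hs : (σs Z Γ' (QuotientGroup.mk g') : Γ') * (w (Zc Z Γ') (σs Z Γ') (hσs Z Γ') g' : Γ') = g' :=
    σ_spec (Zc Z Γ') (σs Z Γ') (hσs Z Γ') g'
  have hcen : ∀ y : Γ, ((incl Z Γ' (w (Zc Z Γ') (σs Z Γ') (hσs Z Γ') g') : Z) : Γ) * y
      = y * ((incl Z Γ' (w (Zc Z Γ') (σs Z Γ') (hσs Z Γ') g') : Z) : Γ) := fun y =>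
    (Subgroup.mem_center_iff.mp (hZ (incl Z Γ' (w (Zc Z Γ') (σs Z Γ') (hσs Z Γ') g')).2) y).symm
  have hs' : ((σs Z Γ' (QuotientGroup.mk g') : Γ') : Γ)
      * ((w (Zc Z Γ') (σs Z Γ') (hσs Z Γ') g' : Γ') : Γ) = (g' : Γ) := by
    rw [← Subgroup.coe_mul, hs]
  rw [← hs', mul_assoc, mul_assoc]
  congr 1
  exact hcen x

lemma beta_injective (hZ : Z ≤ Subgroup.center Γ) (x : Γ) :
    Function.Injective (fun q' : Γ' ⧸ Zc Z Γ' =>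
      (QuotientGroup.mk (((σs Z Γ' q' : Γ') : Γ) * x) : Γ ⧸ Z)) := by
  intro q₁ q₂ h
  have hz : ((((σs Z Γ' q₁ : Γ') : Γ) * x)⁻¹ * (((σs Z Γ' q₂ : Γ') : Γ) * x)) ∈ Z :=
    QuotientGroup.eq.mp h
  have hcomm := Subgroup.mem_center_iff.mp (hZ hz) x
  set m : Γ' := (σs Z Γ' q₁)⁻¹ * σs Z Γ' q₂ with hm
  have hmeq : (m : Γ)
      = x * ((((σs Z Γ' q₁ : Γ') : Γ) * x)⁻¹ * (((σs Z Γ' q₂ : Γ') : Γ) * x)) * x⁻¹ := by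
    push_cast [hm]; group
  have hmZ : m ∈ Zc Z Γ' := by
    have : (m : Γ) ∈ Z := by
      rw [hmeq, hcomm, mul_assoc, mul_inv_cancel, mul_one]
      exact hz
    exact this
  have hq : (QuotientGroup.mk (σs Z Γ' q₁) : Γ' ⧸ Zc Z Γ') = QuotientGroup.mk (σs Z Γ' q₂) :=
    QuotientGroup.eq.mpr hmZ
  rwa [hσs, hσs] at hq

/-- the twisted transport along the coset `x` -/
def Lam (x : Γ) (f : (Γ' ⧸ Zc Z Γ') →₀ ℂ) : (Γ ⧸ Z) →₀ ℂ :=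
  f.sum fun q' a => Finsupp.single (QuotientGroup.mk (((σs Z Γ' q' : Γ') : Γ) * x))
    ((χ (w Z (σb Z Γ') (hσb Z Γ') (((σs Z Γ' q' : Γ') : Γ) * x)) : ℂ) * a)

lemma Lam_zero (x : Γ) : Lam Z χ Γ' x 0 = 0 := Finsupp.sum_zero_index

lemma Lam_single (x : Γ) (q' : Γ' ⧸ Zc Z Γ') (a : ℂ) :
    Lam Z χ Γ' x (Finsupp.single q' a)
      = Finsupp.single (QuotientGroup.mk (((σs Z Γ' q' : Γ') : Γ) * x))
        ((χ (w Z (σb Z Γ') (hσb Z Γ') (((σs Z Γ' q' : Γ') : Γ) * x)) : ℂ) * a) :=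
  Finsupp.sum_single_index (by simp)

lemma Lam_add (x : Γ) (f g : (Γ' ⧸ Zc Z Γ') →₀ ℂ) :
    Lam Z χ Γ' x (f + g) = Lam Z χ Γ' x f + Lam Z χ Γ' x g :=
  Finsupp.sum_add_index' (by simp) (by intros; rw [mul_add, Finsupp.single_add])

lemma Lam_smul (x : Γ) (c : ℂ) (f : (Γ' ⧸ Zc Z Γ') →₀ ℂ) :
    Lam Z χ Γ' x (c • f) = c • Lam Z χ Γ' x f := by
  rw [Lam, Lam, Finsupp.smul_sum, Finsupp.sum_smul_index (by simp)]
  exact Finsupp.sum_congr fun q _ => by rw [Finsupp.smul_single, smul_eq_mul, mul_left_comm]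

lemma T_mapDomain_mul (hZ : Z ≤ Subgroup.center Γ) (x : Γ) (y : MonoidAlgebra ℂ Γ') :
    T Z χ (σb Z Γ') (hσb Z Γ') (MonoidAlgebra.mapDomainRingHom ℂ Γ'.subtype y * MonoidAlgebra.single x 1)
      = Lam Z χ Γ' x (T (Zc Z Γ') (χres Z χ Γ') (σs Z Γ') (hσs Z Γ') y) := by
  induction y using MonoidAlgebra.induction_on with
  | of g' =>
    rw [MonoidAlgebra.of_apply]
    rw [show MonoidAlgebra.mapDomainRingHom ℂ Γ'.subtype (MonoidAlgebra.single g' (1:ℂ))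
        = MonoidAlgebra.single ((g' : Γ') : Γ) 1 by
      rw [MonoidAlgebra.mapDomainRingHom_apply]; exact MonoidAlgebra.mapDomain_single]
    rw [MonoidAlgebra.single_mul_single, one_mul, T_single, T_single, Lam_single]
    have hw := w_key Z Γ' hZ g' x
    have hmk : (QuotientGroup.mk ((g' : Γ) * x) : Γ ⧸ Z)
        = QuotientGroup.mk (((σs Z Γ' (QuotientGroup.mk g') : Γ') : Γ) * x) := by
      rw [hw]
      exact QuotientGroup.mk_mul_of_mem _
        ((incl Z Γ') (w (Zc Z Γ') (σs Z Γ') (hσs Z Γ') g')).2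
    have hwmul : w Z (σb Z Γ') (hσb Z Γ') ((g' : Γ) * x)
        = w Z (σb Z Γ') (hσb Z Γ') (((σs Z Γ' (QuotientGroup.mk g') : Γ') : Γ) * x)
          * (incl Z Γ') (w (Zc Z Γ') (σs Z Γ') (hσs Z Γ') g') := by
      rw [hw]
      exact w_mul Z (σb Z Γ') (hσb Z Γ') _ _
    rw [hmk, hwmul, map_mul]
    push_cast
    congr 1
    rw [show ((χres Z χ Γ') (w (Zc Z Γ') (σs Z Γ') (hσs Z Γ') g') : ℂ)
        = ((χ ((incl Z Γ') (w (Zc Z Γ') (σs Z Γ') (hσs Z Γ') g'))) : ℂ) from rfl]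
    ring
  | add f g hf hg =>
    rw [map_add, add_mul, T_add, T_add, Lam_add, hf, hg]
  | smul c f hf =>
    rw [show MonoidAlgebra.mapDomainRingHom ℂ Γ'.subtype (c • f)
        = c • MonoidAlgebra.mapDomainRingHom ℂ Γ'.subtype f by
      rw [MonoidAlgebra.mapDomainRingHom_apply, MonoidAlgebra.mapDomainRingHom_apply]
      exact MonoidAlgebra.mapDomain_smul _ c f]
    rw [smul_mul_assoc, T_smul, T_smul, Lam_smul, hf]

lemma Lam_apply_self (hZ : Z ≤ Subgroup.center Γ) (x : Γ) (f : (Γ' ⧸ Zc Z Γ') →₀ ℂ)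
    (q' : Γ' ⧸ Zc Z Γ') :
    Lam Z χ Γ' x f (QuotientGroup.mk (((σs Z Γ' q' : Γ') : Γ) * x))
      = (χ (w Z (σb Z Γ') (hσb Z Γ') (((σs Z Γ' q' : Γ') : Γ) * x)) : ℂ) * f q' := by
  induction f using Finsupp.induction with
  | zero => rw [Lam_zero]; simp; rfl
  | single_add q₀ a f hq₀ ha ih =>
    rw [Lam_add, Finsupp.add_apply, Finsupp.add_apply, ih, Lam_single, mul_add]
    congr 1
    by_cases hqq : q₀ = q'
    · subst hqq
      rw [Finsupp.single_eq_same, Finsupp.single_eq_same]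
    · rw [Finsupp.single_eq_of_ne' hqq,
        Finsupp.single_eq_of_ne' (fun hc => hqq (beta_injective Z Γ' hZ x hc)), mul_zero]

lemma Lam_apply_of_ne (x : Γ) (f : (Γ' ⧸ Zc Z Γ') →₀ ℂ) (c : Γ ⧸ Z)
    (hc : ∀ q', (QuotientGroup.mk (((σs Z Γ' q' : Γ') : Γ) * x) : Γ ⧸ Z) ≠ c) :
    Lam Z χ Γ' x f c = 0 := by
  rw [Lam, Finsupp.sum_apply]
  exact Finset.sum_eq_zero fun i _ => Finsupp.single_eq_of_ne' (hc i)

lemma Lam_eq_zero_iff (hZ : Z ≤ Subgroup.center Γ) (x : Γ) (f : (Γ' ⧸ Zc Z Γ') →₀ ℂ)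
    (h : Lam Z χ Γ' x f = 0) : f = 0 := by
  ext q'
  have := Lam_apply_self Z χ Γ' hZ x f q'
  rw [h, Finsupp.zero_apply] at this
  have hu : ((χ (w Z (σb Z Γ') (hσb Z Γ') (((σs Z Γ' q' : Γ') : Γ) * x)) : ℂˣ) : ℂ) ≠ 0 :=
    Units.ne_zero _
  rw [Finsupp.zero_apply]
  exact (mul_eq_zero.mp this.symm).resolve_left hu

end Compat

end
end CPD



open CPD Pointwise in
/-- Let `Γ'` be a normal subgroup of `Γ` of finite index, `Z' = Z ∩ Γ'`, and
`χ'` the restriction of `χ` to `Z'`.  Let `N ⊆ ℂ[Γ]` and `N' ⊆ ℂ[Γ']` be the two-sided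
ideals generated by `{ z − χ(z)·1 : z ∈ Z }` and `{ z − χ'(z)·1 : z ∈ Z' }` respectively.
Then the ring homomorphism `ℂ[Γ'] → ℂ[Γ]/N` induced by the inclusion `Γ' ⊆ Γ` vanishes on
`N'`, hence induces `φ : ℂ[Γ']/N' → ℂ[Γ]/N`; moreover `φ` is injective, and for any set
`X ⊆ Γ` of representatives of the cosets of `Γ'Z` in `Γ`, the images of the elements of `X`
in `ℂ[Γ]/N` form a basis of `ℂ[Γ]/N` as a left `ℂ[Γ']/N'`-module (via `φ`); in particular
`ℂ[Γ]/N` is a free left `ℂ[Γ']/N'`-module of rank `[Γ : Γ'Z]`. -/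
theorem crossed_product_decomposition {Γ : Type*} [Group Γ] (Z : Subgroup Γ)
    (hZ : Z ≤ Subgroup.center Γ) [Fintype Z] (χ : Z →* ℂˣ)
    (Γ' : Subgroup Γ) [Γ'.Normal] [Γ'.FiniteIndex]
    (N : TwoSidedIdeal (MonoidAlgebra ℂ Γ))
    (hN : N = TwoSidedIdeal.span
      {y : MonoidAlgebra ℂ Γ | ∃ z : Z, y = MonoidAlgebra.of ℂ Γ (z : Γ) - (χ z : ℂ) • 1})
    (N' : TwoSidedIdeal (MonoidAlgebra ℂ ↥Γ'))
    (hN' : N' = TwoSidedIdeal.span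
      {y : MonoidAlgebra ℂ ↥Γ' | ∃ (z : ↥Γ') (hz : (z : Γ) ∈ Z),
        y = MonoidAlgebra.of ℂ ↥Γ' z - (χ ⟨(z : Γ), hz⟩ : ℂ) • 1})
    (ψ : MonoidAlgebra ℂ ↥Γ' →+* N.ringCon.Quotient)
    (hψ : ψ = (N.ringCon.mk').comp (MonoidAlgebra.mapDomainRingHom ℂ Γ'.subtype)) :
    (∀ y ∈ N', ψ y = 0) ∧
    ∀ φ : N'.ringCon.Quotient →+* N.ringCon.Quotient,
      (∀ y : MonoidAlgebra ℂ ↥Γ', φ (N'.ringCon.mk' y) = ψ y) →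
      Function.Injective φ ∧
      ∀ X : Set Γ,
        (∀ g : Γ, ∃! x : X, ∃ u ∈ (Γ' ⊔ Z : Subgroup Γ), u * (x : Γ) = g) →
        Function.Bijective (fun c : X →₀ N'.ringCon.Quotient =>
          c.sum fun x a => φ a * N.ringCon.mk' (MonoidAlgebra.of ℂ Γ (x : Γ))) := by
  have hZ' : Zc Z Γ' ≤ Subgroup.center Γ' := by
    intro z hz
    rw [Subgroup.mem_center_iff]
    intro h
    apply Subtype.ext
    push_cast
    exact Subgroup.mem_center_iff.mp (hZ hz) ↑h
  have hNs : N = TwoSidedIdeal.span (sgen Z χ) := hN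
  have hN's : N' = TwoSidedIdeal.span (sgen (Zc Z Γ') (χres Z χ Γ')) := by
    rw [hN']
    congr 1
    ext y
    constructor
    · rintro ⟨z, hz, rfl⟩; exact ⟨⟨z, hz⟩, rfl⟩
    · rintro ⟨z, rfl⟩; exact ⟨(z : Γ'), z.2, rfl⟩
  clear hN hN'
  -- quotient interfaces
  have hmk0 : ∀ x : MonoidAlgebra ℂ Γ, N.ringCon.mk' x = 0
      ↔ T Z χ (σb Z Γ') (hσb Z Γ') x = 0 := by
    intro x; rw [hNs]; exact mk'_span_eq_zero_iff Z χ (σb Z Γ') (hσb Z Γ') hZ x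
  have hmk0' : ∀ y : MonoidAlgebra ℂ ↥Γ', N'.ringCon.mk' y = 0
      ↔ T (Zc Z Γ') (χres Z χ Γ') (σs Z Γ') (hσs Z Γ') y = 0 := by
    intro y; rw [hN's]
    exact mk'_span_eq_zero_iff (Zc Z Γ') (χres Z χ Γ') (σs Z Γ') (hσs Z Γ') hZ' y
  have hmk'surj : ∀ a : N'.ringCon.Quotient, ∃ y, N'.ringCon.mk' y = a :=
    fun a => ⟨Quotient.out a, Quotient.out_eq' a⟩
  have hmksurj : ∀ a : N.ringCon.Quotient, ∃ y, N.ringCon.mk' y = a :=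
    fun a => ⟨Quotient.out a, Quotient.out_eq' a⟩
  have hψ' : ∀ y : MonoidAlgebra ℂ ↥Γ',
      ψ y = N.ringCon.mk' (MonoidAlgebra.mapDomainRingHom ℂ Γ'.subtype y) := by
    intro y; rw [hψ]; rfl
  constructor
  · -- part 1
    intro y hy
    rw [hN's] at hy
    refine (TwoSidedIdeal.mem_ker ψ).mp (TwoSidedIdeal.mem_span_iff.mp hy (TwoSidedIdeal.ker ψ) ?_)
    rintro u ⟨z, rfl⟩
    rw [SetLike.mem_coe, TwoSidedIdeal.mem_ker, hψ']
    have himg : MonoidAlgebra.mapDomainRingHom ℂ Γ'.subtype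
        (MonoidAlgebra.of ℂ ↥Γ' ((z : Zc Z Γ') : Γ') - ((χres Z χ Γ' z : ℂ)) • 1)
        = MonoidAlgebra.of ℂ Γ ((incl Z Γ' z : Z) : Γ) - ((χ (incl Z Γ' z) : ℂ)) • 1 := by
      have e1 : ((χres Z χ Γ' z : ℂ)) • (1 : MonoidAlgebra ℂ ↥Γ')
          = MonoidAlgebra.single (1 : ↥Γ') ((χres Z χ Γ' z : ℂ)) := by
        rw [MonoidAlgebra.one_def, MonoidAlgebra.smul_single, smul_eq_mul, mul_one]
      have e2 : ((χ (incl Z Γ' z) : ℂ)) • (1 : MonoidAlgebra ℂ Γ)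
          = MonoidAlgebra.single (1 : Γ) ((χ (incl Z Γ' z) : ℂ)) := by
        rw [MonoidAlgebra.one_def, MonoidAlgebra.smul_single, smul_eq_mul, mul_one]
      rw [map_sub, e1, e2, MonoidAlgebra.mapDomainRingHom_apply,
        MonoidAlgebra.mapDomainRingHom_apply]
      congr 1
      · rw [MonoidAlgebra.of_apply, MonoidAlgebra.of_apply]
        exact MonoidAlgebra.mapDomain_single
      · exact MonoidAlgebra.mapDomain_single
    rw [himg, hmk0]
    apply T_eq_zero_of_mem_V
    have : MonoidAlgebra.of ℂ Γ ((incl Z Γ' z : Z) : Γ) - ((χ (incl Z Γ' z) : ℂ)) • 1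
        = MonoidAlgebra.single ((1:Γ) * (incl Z Γ' z : Z)) 1
          - (χ (incl Z Γ' z) : ℂ) • MonoidAlgebra.single (1:Γ) 1 := by
      rw [MonoidAlgebra.of_apply, one_mul, MonoidAlgebra.one_def]
    rw [this]
    exact gen_mem_V Z χ _ _ _
  · intro φ hφ
    have hφ0 : ∀ a, φ a = 0 → a = 0 := by
      intro a ha
      obtain ⟨y, rfl⟩ := hmk'surj a
      rw [hφ, hψ', hmk0] at ha
      have h1 : T Z χ (σb Z Γ') (hσb Z Γ')
          (MonoidAlgebra.mapDomainRingHom ℂ Γ'.subtype y * MonoidAlgebra.single (1:Γ) 1) = 0 := by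
        rw [show MonoidAlgebra.single (1:Γ) (1:ℂ) = 1 from MonoidAlgebra.one_def.symm, mul_one]
        exact ha
      rw [T_mapDomain_mul Z χ Γ' hZ 1 y] at h1
      exact (hmk0' y).mpr (Lam_eq_zero_iff Z χ Γ' hZ 1 _ h1)
    have hinj : Function.Injective φ := by
      intro a b hab
      have := hφ0 (a - b) (by rw [map_sub, hab, sub_self])
      exact sub_eq_zero.mp this
    refine ⟨hinj, ?_⟩
    intro X hX
    set F := fun c : X →₀ N'.ringCon.Quotient =>
      c.sum fun x a => φ a * N.ringCon.mk' (MonoidAlgebra.of ℂ Γ (x : Γ)) with hF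
    have hpair : ∀ (x₁ x₂ : X) (q₁ q₂ : Γ' ⧸ Zc Z Γ'),
        (QuotientGroup.mk (((σs Z Γ' q₁ : Γ') : Γ) * (x₁ : Γ)) : Γ ⧸ Z)
          = QuotientGroup.mk (((σs Z Γ' q₂ : Γ') : Γ) * (x₂ : Γ)) → x₁ = x₂ := by
      intro x₁ x₂ q₁ q₂ h
      have hz0 : ((((σs Z Γ' q₁ : Γ') : Γ) * (x₁:Γ))⁻¹ * (((σs Z Γ' q₂ : Γ') : Γ) * (x₂:Γ))) ∈ Z :=
        QuotientGroup.eq.mp h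
      set z : Γ := (((σs Z Γ' q₁ : Γ') : Γ) * (x₁:Γ))⁻¹ * (((σs Z Γ' q₂ : Γ') : Γ) * (x₂:Γ))
        with hzdef
      have he : ((σs Z Γ' q₂ : Γ') : Γ) * (x₂:Γ) = ((σs Z Γ' q₁ : Γ') : Γ) * (x₁:Γ) * z := by
        rw [hzdef]; group
      have hP₁ : ∃ u ∈ (Γ' ⊔ Z : Subgroup Γ), u * (x₁ : Γ)
          = ((σs Z Γ' q₁ : Γ') : Γ) * (x₁:Γ) :=
        ⟨_, Subgroup.mem_sup_left (σs Z Γ' q₁).2, rfl⟩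
      have hP₂ : ∃ u ∈ (Γ' ⊔ Z : Subgroup Γ), u * (x₂ : Γ)
          = ((σs Z Γ' q₁ : Γ') : Γ) * (x₁:Γ) := by
        refine ⟨((σs Z Γ' q₂ : Γ') : Γ) * z⁻¹,
          Subgroup.mul_mem _ (Subgroup.mem_sup_left (σs Z Γ' q₂).2)
            (Subgroup.mem_sup_right (Z.inv_mem hz0)), ?_⟩
        have hc := Subgroup.mem_center_iff.mp (hZ (Z.inv_mem hz0)) (x₂:Γ)
        rw [mul_assoc, ← hc, ← mul_assoc, he]
        group
      exact (hX _).unique hP₁ hP₂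
    constructor
    · -- injective
      have hker : ∀ c, F c = 0 → c = 0 := by
        intro c hc
        set y : X → MonoidAlgebra ℂ ↥Γ' := fun x => Quotient.out (c x) with hy
        have hyx : ∀ x : X, N'.ringCon.mk' (y x) = c x := fun x => Quotient.out_eq' (c x)
        have hFc : F c = N.ringCon.mk' (∑ x ∈ c.support,
            MonoidAlgebra.mapDomainRingHom ℂ Γ'.subtype (y x)
              * MonoidAlgebra.single (x : Γ) 1) := by
          rw [map_sum, hF]
          refine Finset.sum_congr rfl fun x hx => ?_
          rw [← hyx x]
          beta_reduce
          rw [hφ, hψ', map_mul, MonoidAlgebra.of_apply]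
        have h1 : T Z χ (σb Z Γ') (hσb Z Γ') (∑ x ∈ c.support,
            MonoidAlgebra.mapDomainRingHom ℂ Γ'.subtype (y x)
              * MonoidAlgebra.single (x : Γ) 1) = 0 := by
          rw [← hmk0, ← hFc]
          exact hc
        rw [T_finsetSum] at h1
        have hT0 : (∑ x ∈ c.support, Lam Z χ Γ' (x:Γ)
            (T (Zc Z Γ') (χres Z χ Γ') (σs Z Γ') (hσs Z Γ') (y x))) = 0 := by
          rw [← h1]
          exact Finset.sum_congr rfl fun x _ => (T_mapDomain_mul Z χ Γ' hZ (x:Γ) (y x)).symm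
        ext x₀
        rw [Finsupp.coe_zero, Pi.zero_apply]
        by_cases hx₀ : x₀ ∈ c.support
        · have hTy : T (Zc Z Γ') (χres Z χ Γ') (σs Z Γ') (hσs Z Γ') (y x₀) = 0 := by
            ext q'
            have hev := congrArg
              (fun f : (Γ ⧸ Z) →₀ ℂ =>
                f (QuotientGroup.mk (((σs Z Γ' q' : Γ') : Γ) * (x₀:Γ)))) hT0
            simp only [Finsupp.coe_zero, Pi.zero_apply] at hev
            rw [Finset.sum_apply'] at hev
            rw [Finset.sum_eq_single x₀
              (fun x _ hne =>
                Lam_apply_of_ne Z χ Γ' _ _ _ (fun q'' heq => hne (hpair x x₀ q'' q' heq)))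
              (fun habs => absurd hx₀ habs)] at hev
            rw [Lam_apply_self Z χ Γ' hZ] at hev
            have hu := Units.ne_zero
              (χ (w Z (σb Z Γ') (hσb Z Γ') (((σs Z Γ' q' : Γ') : Γ) * (x₀:Γ))))
            rw [Finsupp.coe_zero, Pi.zero_apply]
            exact (mul_eq_zero.mp hev).resolve_left hu
          rw [← hyx x₀]
          exact (hmk0' _).mpr hTy
        · exact Finsupp.notMem_support_iff.mp hx₀
      intro c d hcd
      have hsub : F (c - d) = F c - F d := by
        rw [hF]
        exact Finsupp.sum_sub_index (by intros; rw [map_sub, sub_mul])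
      have := hker (c - d) (by rw [hsub, hcd, sub_self])
      exact sub_eq_zero.mp this
    · -- surjective
      intro t
      obtain ⟨a, rfl⟩ := hmksurj t
      induction a using MonoidAlgebra.induction with
      | zero => exact ⟨0, by simp only [hF, Finsupp.sum_zero_index, map_zero]⟩
      | single_add g b f hgf hb ih =>
        obtain ⟨cf, hcf⟩ := ih
        haveI hZnormal : Z.Normal := ⟨fun n hn g₀ => by
          have hcomm := Subgroup.mem_center_iff.mp (hZ hn) g₀
          rw [hcomm, mul_assoc, mul_inv_cancel, mul_one]
          exact hn⟩
        obtain ⟨x, ⟨u, hu, hux⟩, -⟩ := hX g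
        have hu' : u ∈ ((Γ' : Set Γ) * (Z : Set Γ)) := by
          rw [← Subgroup.mul_normal]
          exact hu
        obtain ⟨h, hh, z, hz, rfl⟩ := hu'
        have hcz := Subgroup.mem_center_iff.mp (hZ hz)
        have hg : g = (h * (x:Γ)) * z := by
          rw [← hux, mul_assoc, ← hcz (x:Γ), ← mul_assoc]
        refine ⟨Finsupp.single x (N'.ringCon.mk'
          (MonoidAlgebra.single (⟨h, hh⟩ : Γ') ((χ ⟨z, hz⟩ : ℂ) * b))) + cf, ?_⟩
        show F _ = N.ringCon.mk' (MonoidAlgebra.single g b + f)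
        have hFadd : ∀ c d : X →₀ N'.ringCon.Quotient, F (c + d) = F c + F d := fun c d => by
          rw [hF]
          exact Finsupp.sum_add_index' (fun x => by rw [map_zero, zero_mul])
            (fun x a₁ a₂ => by rw [map_add, add_mul])
        rw [hFadd, map_add, hcf]
        congr 1
        rw [hF]
        beta_reduce
        rw [Finsupp.sum_single_index (by rw [map_zero, zero_mul])]
        rw [hφ, hψ', ← map_mul]
        have hprod : MonoidAlgebra.mapDomainRingHom ℂ Γ'.subtype
            (MonoidAlgebra.single (⟨h, hh⟩ : Γ') ((χ ⟨z, hz⟩ : ℂ) * b))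
              * MonoidAlgebra.of ℂ Γ (x : Γ)
            = MonoidAlgebra.single (h * (x:Γ)) ((χ ⟨z, hz⟩ : ℂ) * b) := by
          have hmd : (MonoidAlgebra.mapDomainRingHom ℂ Γ'.subtype)
              (MonoidAlgebra.single (⟨h, hh⟩ : Γ') ((χ ⟨z, hz⟩ : ℂ) * b))
              = MonoidAlgebra.single h ((χ ⟨z, hz⟩ : ℂ) * b) := by
            rw [MonoidAlgebra.mapDomainRingHom_apply]
            exact MonoidAlgebra.mapDomain_single
          rw [hmd, MonoidAlgebra.of_apply, MonoidAlgebra.single_mul_single, mul_one]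
        rw [hprod]
        rw [← sub_eq_zero, ← map_sub, hmk0]
        apply T_eq_zero_of_mem_V
        have heq : MonoidAlgebra.single (h * (x:Γ)) ((χ ⟨z, hz⟩ : ℂ) * b)
              - MonoidAlgebra.single g b
            = -(MonoidAlgebra.single ((h * (x:Γ)) * ((⟨z, hz⟩ : Z) : Γ)) b
              - (χ ⟨z, hz⟩ : ℂ) • MonoidAlgebra.single (h * (x:Γ)) b) := by
          rw [hg, MonoidAlgebra.smul_single, smul_eq_mul, neg_sub]
        rw [heq]
        exact Submodule.neg_mem _ (gen_mem_V Z χ _ _ _)
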